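/- For all integers d with 0 ≤ d ≤ ⌊(n-1)/2⌋, the number of admissible pinnacle sets of the symmetric group S_n having cardinality at most d equals the binomial coefficient C(n-1, d). -/

import Mathlib

/-- The pinnacle set of a word `w : Fin n → ℤ`: values `w i` (for `0 < i < n-1`)
strictly larger than both neighbors. -/
def PinSet (n : ℕ) (w : Fin n → ℤ) : Set ℤ :=
  {x | ∃ (i : ℕ) (h0 : 0 < i) (h2 : i + 1 < n),
    w ⟨i, by omega⟩ = x ∧ w ⟨i - 1, by omega⟩ < w ⟨i, by omega⟩ ∧
      w ⟨i + 1, h2⟩ < w ⟨i, by omega⟩}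

/-- `w : Fin n → ℤ` is the one-line notation of a signed permutation of rank `n`:
the absolute values of its entries are distinct elements of `{1,...,n}`
(hence a bijection onto `{1,...,n}`). -/
def IsSignedPerm (n : ℕ) (w : Fin n → ℤ) : Prop :=
  (∀ i, 1 ≤ |w i| ∧ |w i| ≤ (n : ℤ)) ∧ Function.Injective fun i => |w i|

/-- `S` is an admissible pinnacle set of the hyperoctahedral group `B_n`. -/
def APSB (n : ℕ) (S : Finset ℤ) : Prop :=
  ∃ w : Fin n → ℤ, IsSignedPerm n w ∧ PinSet n w = ↑S

/-- `S` is an admissible pinnacle set of the type `D` group `D_n`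
(signed permutations with an even number of negative one-line entries). -/
def APSD (n : ℕ) (S : Finset ℤ) : Prop :=
  ∃ w : Fin n → ℤ, IsSignedPerm n w ∧
    Even (Finset.univ.filter fun i => w i < 0).card ∧ PinSet n w = ↑S

/-- `S` is an admissible pinnacle set of the symmetric group `S_n`
(an unsigned permutation is a signed permutation with all entries positive). -/
def APSA (n : ℕ) (S : Finset ℤ) : Prop :=
  ∃ w : Fin n → ℤ, IsSignedPerm n w ∧ (∀ i, 0 < w i) ∧ PinSet n w = ↑S

/-- `T` is an admissible pinnacle set of the totally ordered finite set `X ⊆ ℤ`: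
it is the pinnacle set of some arrangement of the elements of `X`. -/
def APSOn (X : Finset ℤ) (T : Finset ℤ) : Prop :=
  ∃ w : Fin X.card → ℤ, Function.Injective w ∧ (∀ i, w i ∈ X) ∧
    PinSet X.card w = ↑T



section Sorted
open Finset
variable (F : Finset ℤ)

lemma sort_getD_mem {t : ℕ} (ht : t < (F.sort (·≤·)).length) :
    (F.sort (·≤·)).getD t 0 ∈ F := by
  rw [List.getD_eq_getElem _ _ ht]
  exact (Finset.mem_sort _).1 (List.getElem_mem _)

lemma sort_getD_lt {i j : ℕ} (hij : i < j) (hj : j < (F.sort (·≤·)).length) :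
    (F.sort (·≤·)).getD i 0 < (F.sort (·≤·)).getD j 0 := by
  rw [List.getD_eq_getElem _ _ (hij.trans hj), List.getD_eq_getElem _ _ hj]
  exact List.SortedLT.strictMono_get (Finset.sortedLT_sort F)
    (show (⟨i,_⟩ : Fin _) < ⟨j,_⟩ from hij)

lemma sort_getD_le {i j : ℕ} (hij : i ≤ j) (hj : j < (F.sort (·≤·)).length) :
    (F.sort (·≤·)).getD i 0 ≤ (F.sort (·≤·)).getD j 0 := by
  rcases hij.lt_or_eq with h | h
  · exact (sort_getD_lt F h hj).le
  · rw [h]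

lemma sort_getD_injOn {i j : ℕ} (hi : i < (F.sort (·≤·)).length)
    (hj : j < (F.sort (·≤·)).length)
    (h : (F.sort (·≤·)).getD i 0 = (F.sort (·≤·)).getD j 0) : i = j := by
  rcases Nat.lt_trichotomy i j with hc | hc | hc
  · exact absurd h (sort_getD_lt F hc hj).ne
  · exact hc
  · exact absurd h.symm (sort_getD_lt F hc hi).ne

lemma mem_eq_getD {y : ℤ} (hy : y ∈ F) :
    ∃ i : ℕ, i < (F.sort (·≤·)).length ∧ (F.sort (·≤·)).getD i 0 = y := by
  rw [← Finset.mem_sort (α := ℤ) (·≤·)] at hy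
  obtain ⟨i, hi, h⟩ := List.getElem_of_mem hy
  exact ⟨i, hi, by rw [List.getD_eq_getElem _ _ hi]; exact h⟩

lemma filter_lt_card {t : ℕ} (ht : t < (F.sort (·≤·)).length) :
    (F.filter (· < (F.sort (·≤·)).getD t 0)).card = t := by
  classical
  have : F.filter (· < (F.sort (·≤·)).getD t 0)
      = (Finset.range t).image (fun i => (F.sort (·≤·)).getD i 0) := by
    ext y
    simp only [mem_filter, mem_image, mem_range]
    constructor
    · rintro ⟨hyF, hylt⟩
      obtain ⟨i, hi, hieq⟩ := mem_eq_getD F hyF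
      refine ⟨i, ?_, hieq⟩
      by_contra h
      have := sort_getD_le F (Nat.le_of_not_lt h) hi
      omega
    · rintro ⟨i, hi, rfl⟩
      exact ⟨sort_getD_mem F (hi.trans ht), sort_getD_lt F hi ht⟩
  rw [this, Finset.card_image_of_injOn, Finset.card_range]
  intro i hi j hj hij
  simp only [Finset.coe_range, Set.mem_Iio] at hi hj
  exact sort_getD_injOn F (hi.trans ht) (hj.trans ht) hij

lemma filter_le_card {t : ℕ} (ht : t < (F.sort (·≤·)).length) :
    (F.filter (· ≤ (F.sort (·≤·)).getD t 0)).card = t + 1 := by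
  classical
  have key : F.filter (· ≤ (F.sort (·≤·)).getD t 0)
      = (Finset.range (t+1)).image (fun i => (F.sort (·≤·)).getD i 0) := by
    ext y
    simp only [mem_filter, mem_image, mem_range]
    constructor
    · rintro ⟨hyF, hyle⟩
      obtain ⟨i, hi, hieq⟩ := mem_eq_getD F hyF
      refine ⟨i, ?_, hieq⟩
      by_contra h
      have : (F.sort (·≤·)).getD t 0 < (F.sort (·≤·)).getD i 0 :=
        sort_getD_lt F (by omega) hi
      omega
    · rintro ⟨i, hi, rfl⟩
      exact ⟨sort_getD_mem F (by omega), sort_getD_le F (by omega) ht⟩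
  rw [key, Finset.card_image_of_injOn, Finset.card_range]
  intro i hi j hj hij
  simp only [Finset.coe_range, Set.mem_Iio] at hi hj
  exact sort_getD_injOn F (by omega) (by omega) hij

lemma getD_lt_of_count {t : ℕ} {v : ℤ} (ht : t < (F.sort (·≤·)).length)
    (hc : t + 1 ≤ (F.filter (· < v)).card) : (F.sort (·≤·)).getD t 0 < v := by
  classical
  by_contra h
  push_neg at h
  have hsub : F.filter (· < v) ⊆ F.filter (· < (F.sort (·≤·)).getD t 0) := by
    intro y hy
    rw [Finset.mem_filter] at hy ⊢
    exact ⟨hy.1, lt_of_lt_of_le hy.2 h⟩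
  have := Finset.card_le_card hsub
  rw [filter_lt_card F ht] at this
  omega

end Sorted

def Adm (n : ℕ) (S : Finset ℤ) : Prop :=
  ∀ x ∈ S, x ≤ (n : ℤ) ∧ 2 * (S.filter (· ≤ x)).card < x

lemma apsa_adm {n : ℕ} {S : Finset ℤ} (h : APSA n S) : Adm n S := by
  classical
  obtain ⟨w, ⟨hb, hinj⟩, hpos, hpin⟩ := h
  have habs : ∀ i, |w i| = w i := fun i => abs_of_pos (hpos i)
  have hwinj : Function.Injective w := by
    intro i j hij
    apply hinj
    simp only [habs, hij]
  set w' : ℕ → ℤ := fun i => if h : i < n then w ⟨i, h⟩ else 0 with hw'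
  have hw'eq : ∀ (i : ℕ) (h : i < n), w' i = w ⟨i, h⟩ := by
    intro i h; simp [hw', h]
  intro x hx
  have hxpin : x ∈ PinSet n w := by rw [hpin]; exact_mod_cast hx
  obtain ⟨i₀, hi0, hi2, heq0, _, _⟩ := hxpin
  have hxn : x ≤ (n : ℤ) := by
    have := (hb ⟨i₀, by omega⟩).2
    rw [habs, heq0] at this
    exact this
  refine ⟨hxn, ?_⟩
  set P : Finset ℕ := (Finset.range n).filter
    (fun i => 0 < i ∧ i + 1 < n ∧ w' (i-1) < w' i ∧ w' (i+1) < w' i ∧ w' i ≤ x) with hP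
  have hPmem : ∀ {i}, i ∈ P ↔ i < n ∧ 0 < i ∧ i + 1 < n ∧ w' (i-1) < w' i ∧ w' (i+1) < w' i ∧ w' i ≤ x := by
    intro i
    simp [hP, Finset.mem_filter, Finset.mem_range, and_assoc]
  -- bijection between P and S.filter (· ≤ x)
  have hcard : P.card = (S.filter (· ≤ x)).card := by
    apply Finset.card_bij (fun i _ => w' i)
    · intro i hi
      rw [hPmem] at hi
      obtain ⟨hin, h0, h2, hl, hr, hle⟩ := hi
      rw [Finset.mem_filter]
      constructor
      · have : w' i ∈ PinSet n w := by
          refine ⟨i, h0, h2, ?_, ?_, ?_⟩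
          · rw [hw'eq i hin]
          · rw [← hw'eq (i-1) (by omega), ← hw'eq i hin]; exact hl
          · rw [← hw'eq (i+1) h2, ← hw'eq i hin]; exact hr
        rw [hpin] at this
        exact_mod_cast this
      · exact hle
    · intro i hi j hj hij
      rw [hPmem] at hi hj
      rw [hw'eq i (by omega), hw'eq j (by omega)] at hij
      exact congrArg Fin.val (hwinj hij)
    · intro y hy
      rw [Finset.mem_filter] at hy
      have : y ∈ PinSet n w := by rw [hpin]; exact_mod_cast hy.1
      obtain ⟨i, h0, h2, heq, hl, hr⟩ := this
      refine ⟨i, ?_, ?_⟩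
      · rw [hPmem]
        refine ⟨by omega, h0, h2, ?_, ?_, ?_⟩
        · rw [hw'eq (i-1) (by omega), hw'eq i (by omega)]; exact hl
        · rw [hw'eq (i+1) h2, hw'eq i (by omega)]; exact hr
        · rw [hw'eq i (by omega), heq]; exact hy.2
      · rw [hw'eq i (by omega), heq]
  have hPne : P.Nonempty := by
    obtain ⟨i, h0, h2, heq, hl, hr⟩ := (by rw [hpin]; exact_mod_cast hx : x ∈ PinSet n w)
    refine ⟨i, ?_⟩
    rw [hPmem]
    refine ⟨by omega, h0, h2, ?_, ?_, ?_⟩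
    · rw [hw'eq (i-1) (by omega), hw'eq i (by omega)]; exact hl
    · rw [hw'eq (i+1) h2, hw'eq i (by omega)]; exact hr
    · rw [hw'eq i (by omega), heq]
  -- build Q
  set p0 := P.min' hPne with hp0
  have hp0P : p0 ∈ P := P.min'_mem hPne
  set Q : Finset ℕ := (P ∪ P.image (· + 1)) ∪ {p0 - 1} with hQ
  have hdisj : Disjoint P (P.image (· + 1)) := by
    rw [Finset.disjoint_left]
    intro p hpP hpI
    obtain ⟨q, hqP, rfl⟩ := Finset.mem_image.1 hpI
    rw [hPmem] at hpP hqP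
    have h1 : w' (q + 1) < w' q := hqP.2.2.2.2.1
    have h2 : w' (q + 1 - 1) < w' (q + 1) := hpP.2.2.2.1
    simp only [Nat.add_sub_cancel] at h2
    omega
  have hnotin : p0 - 1 ∉ P ∪ P.image (· + 1) := by
    intro hcon
    rcases Finset.mem_union.1 hcon with hc | hc
    · have := P.min'_le _ hc
      have h0 : 0 < p0 := (hPmem.1 hp0P).2.1
      omega
    · obtain ⟨q, hqP, hq⟩ := Finset.mem_image.1 hc
      have := P.min'_le _ hqP
      have h0 : 0 < p0 := (hPmem.1 hp0P).2.1
      omega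
  have hQcard : Q.card = 2 * P.card + 1 := by
    rw [hQ, Finset.card_union_of_disjoint (by simpa using hnotin),
      Finset.card_union_of_disjoint hdisj, Finset.card_image_of_injective _ (add_left_injective 1),
      Finset.card_singleton]
    omega
  -- every q in Q : q < n, 1 ≤ w' q, w' q ≤ x
  have hQprop : ∀ q ∈ Q, q < n ∧ 1 ≤ w' q ∧ w' q ≤ x := by
    intro q hq
    have hple : ∀ p, p < n → 1 ≤ w' p := by
      intro p hp
      rw [hw'eq p hp]
      have := (hb ⟨p, hp⟩).1
      rwa [habs] at this
    rw [hQ] at hq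
    rcases Finset.mem_union.1 hq with hc | hc
    · rcases Finset.mem_union.1 hc with hc | hc
      · have h := hPmem.1 hc
        exact ⟨by omega, hple q (by omega), h.2.2.2.2.2⟩
      · obtain ⟨p, hpP, rfl⟩ := Finset.mem_image.1 hc
        have h := hPmem.1 hpP
        refine ⟨h.2.2.1, hple _ h.2.2.1, ?_⟩
        exact le_of_lt (lt_of_lt_of_le h.2.2.2.2.1 h.2.2.2.2.2)
    · have hq' : q = p0 - 1 := by simpa using hc
      subst hq'
      have h := hPmem.1 hp0P
      refine ⟨by omega, hple _ (by omega), ?_⟩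
      exact le_of_lt (lt_of_lt_of_le h.2.2.2.1 h.2.2.2.2.2)
  -- map Q into Icc 1 x injectively
  have hQle : Q.card ≤ (Finset.Icc (1:ℤ) x).card := by
    apply Finset.card_le_card_of_injOn w'
    · intro q hq
      have := hQprop q hq
      exact Finset.mem_Icc.2 ⟨this.2.1, this.2.2⟩
    · intro i hi j hj hij
      have hi' := (hQprop i hi).1
      have hj' := (hQprop j hj).1
      rw [hw'eq i hi', hw'eq j hj'] at hij
      exact congrArg Fin.val (hwinj hij)
  rw [Int.card_Icc] at hQle
  have h2m : 2 * (S.filter (· ≤ x)).card + 1 ≤ (x + 1 - 1).toNat := by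
    rw [← hcard]
    omega
  omega

lemma adm_apsa {n : ℕ} {S : Finset ℤ} (h : Adm n S) : APSA n S := by
  classical
  set k := S.card with hk
  set C := (Finset.Icc (1:ℤ) n) \ S with hC
  have hslen : (S.sort (·≤·)).length = k := Finset.length_sort _
  have hSsub : S ⊆ Finset.Icc (1:ℤ) n := by
    intro x hx
    obtain ⟨h1, h2⟩ := h x hx
    have hxf : x ∈ S.filter (· ≤ x) := Finset.mem_filter.2 ⟨hx, le_refl x⟩
    have hcp : 1 ≤ (S.filter (· ≤ x)).card := Finset.card_pos.2 ⟨x, hxf⟩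
    rw [Finset.mem_Icc]
    refine ⟨?_, h1⟩
    have : (1:ℤ) ≤ ((S.filter (· ≤ x)).card : ℤ) := by exact_mod_cast hcp
    omega
  have hIcard : (Finset.Icc (1:ℤ) n).card = n := by
    rw [Int.card_Icc]; simp
  have hCcard : C.card = n - k := by
    rw [hC, Finset.card_sdiff_of_subset hSsub, hIcard, hk]
  have halen : (C.sort (·≤·)).length = n - k := by rw [Finset.length_sort, hCcard]
  have hkn2 : k ≤ n := hIcard ▸ Finset.card_le_card hSsub
  have hs_lb : ∀ j < k, 2 * (j:ℤ) + 3 ≤ (S.sort (·≤·)).getD j 0 := by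
    intro j hj
    have hjlen : j < (S.sort (·≤·)).length := by omega
    have hmem : (S.sort (·≤·)).getD j 0 ∈ S := sort_getD_mem S hjlen
    have hcount := filter_le_card S hjlen
    have h2 := (h _ hmem).2
    rw [hcount] at h2
    omega
  have hkn : 1 ≤ k → 2 * k < n := by
    intro h1
    have h2 := hs_lb (k-1) (by omega)
    have hmem : (S.sort (·≤·)).getD (k-1) 0 ∈ S := sort_getD_mem S (by omega)
    have h3 := (h _ hmem).1
    omega
  have hA : ∀ j < k, ∀ t ≤ j + 1, (C.sort (·≤·)).getD t 0 < (S.sort (·≤·)).getD j 0 := by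
    intro j hj t ht
    have h2k : 2 * k < n := hkn (by omega)
    have hj1 : j + 1 < (C.sort (·≤·)).length := by omega
    have hle : (C.sort (·≤·)).getD t 0 ≤ (C.sort (·≤·)).getD (j+1) 0 := sort_getD_le C ht hj1
    refine lt_of_le_of_lt hle ?_
    apply getD_lt_of_count C hj1
    have hvS : (S.sort (·≤·)).getD j 0 ∈ S := sort_getD_mem S (by omega)
    have hvn : (S.sort (·≤·)).getD j 0 ≤ (n:ℤ) := (h _ hvS).1
    have hvlb : 2 * (j:ℤ) + 3 ≤ (S.sort (·≤·)).getD j 0 := hs_lb j hj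
    have hCf : C.filter (· < (S.sort (·≤·)).getD j 0)
        = (Finset.Icc (1:ℤ) n).filter (· < (S.sort (·≤·)).getD j 0)
          \ S.filter (· < (S.sort (·≤·)).getD j 0) := by
      rw [hC]
      ext y
      simp only [Finset.mem_filter, Finset.mem_sdiff]
      tauto
    have hIf : (Finset.Icc (1:ℤ) n).filter (· < (S.sort (·≤·)).getD j 0)
        = Finset.Icc (1:ℤ) ((S.sort (·≤·)).getD j 0 - 1) := by
      ext y
      simp only [Finset.mem_filter, Finset.mem_Icc]
      omega
    have hSf : (S.filter (· < (S.sort (·≤·)).getD j 0)).card = j := filter_lt_card S (by omega)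
    have hsub2 : S.filter (· < (S.sort (·≤·)).getD j 0)
        ⊆ (Finset.Icc (1:ℤ) n).filter (· < (S.sort (·≤·)).getD j 0) := by
      intro y hy
      rw [Finset.mem_filter] at hy ⊢
      exact ⟨hSsub hy.1, hy.2⟩
    rw [hCf, Finset.card_sdiff_of_subset hsub2, hSf, hIf, Int.card_Icc]
    omega
  set wN : ℕ → ℤ := fun i => if i < 2*k then
      (if i % 2 = 0 then (C.sort (·≤·)).getD (i/2) 0 else (S.sort (·≤·)).getD (i/2) 0)
    else (C.sort (·≤·)).getD (i - k) 0 with hwN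
  have hwS : ∀ i, i < 2*k → i % 2 = 1 → wN i = (S.sort (·≤·)).getD (i/2) 0 := by
    intro i h1 h2
    simp only [hwN, if_pos h1]
    rw [if_neg (by omega)]
  have hwE : ∀ i, i < 2*k → i % 2 = 0 → wN i = (C.sort (·≤·)).getD (i/2) 0 := by
    intro i h1 h2
    simp only [hwN, if_pos h1, if_pos h2]
  have hwT : ∀ i, ¬ (i < 2*k) → wN i = (C.sort (·≤·)).getD (i - k) 0 := by
    intro i h1
    simp only [hwN, if_neg h1]
  have hdisjSC : ∀ y, y ∈ S → y ∈ C → False := by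
    intro y h1 h2
    rw [hC, Finset.mem_sdiff] at h2
    exact h2.2 h1
  have hmemSC : ∀ i < n, wN i ∈ S ∪ C := by
    intro i hi
    by_cases h1 : i < 2*k
    · have hk2 : 2 * k < n := hkn (by omega)
      by_cases h2 : i % 2 = 0
      · rw [hwE i h1 h2]
        exact Finset.mem_union_right _ (sort_getD_mem C (by omega))
      · rw [hwS i h1 (by omega)]
        exact Finset.mem_union_left _ (sort_getD_mem S (by omega))
    · rw [hwT i h1]
      exact Finset.mem_union_right _ (sort_getD_mem C (by omega))
  have hSC : S ∪ C = Finset.Icc (1:ℤ) n := by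
    rw [hC, Finset.union_sdiff_of_subset hSsub]
  have hbound : ∀ i < n, 1 ≤ wN i ∧ wN i ≤ (n:ℤ) := by
    intro i hi
    have := hmemSC i hi
    rw [hSC, Finset.mem_Icc] at this
    exact this
  have hinj : ∀ i < n, ∀ j < n, wN i = wN j → i = j := by
    intro i hi j hj hij
    by_cases hi1 : i < 2*k <;> by_cases hj1 : j < 2*k
    · have h2k : 2*k < n := hkn (by omega)
      by_cases hi2 : i % 2 = 0 <;> by_cases hj2 : j % 2 = 0
      · rw [hwE i hi1 hi2, hwE j hj1 hj2] at hij
        have := sort_getD_injOn C (i := i/2) (j := j/2) (by omega) (by omega) hij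
        omega
      · exfalso
        apply hdisjSC (wN i)
        · rw [hij, hwS j hj1 (by omega)]; exact sort_getD_mem S (by omega)
        · rw [hwE i hi1 hi2]; exact sort_getD_mem C (by omega)
      · exfalso
        apply hdisjSC (wN i)
        · rw [hwS i hi1 (by omega)]; exact sort_getD_mem S (by omega)
        · rw [hij, hwE j hj1 hj2]; exact sort_getD_mem C (by omega)
      · rw [hwS i hi1 (by omega), hwS j hj1 (by omega)] at hij
        have := sort_getD_injOn S (i := i/2) (j := j/2) (by omega) (by omega) hij
        omega
    · have h2k : 2*k < n := hkn (by omega)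
      by_cases hi2 : i % 2 = 0
      · rw [hwE i hi1 hi2, hwT j hj1] at hij
        have := sort_getD_injOn C (i := i/2) (j := j - k) (by omega) (by omega) hij
        omega
      · exfalso
        apply hdisjSC (wN i)
        · rw [hwS i hi1 (by omega)]; exact sort_getD_mem S (by omega)
        · rw [hij, hwT j hj1]; exact sort_getD_mem C (by omega)
    · have h2k : 2*k < n := hkn (by omega)
      by_cases hj2 : j % 2 = 0
      · rw [hwT i hi1, hwE j hj1 hj2] at hij
        have := sort_getD_injOn C (i := i - k) (j := j/2) (by omega) (by omega) hij
        omega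
      · exfalso
        apply hdisjSC (wN j)
        · rw [hwS j hj1 (by omega)]; exact sort_getD_mem S (by omega)
        · rw [← hij, hwT i hi1]; exact sort_getD_mem C (by omega)
    · rw [hwT i hi1, hwT j hj1] at hij
      have h1k : k ≤ i ∧ k ≤ j := by
        constructor <;> omega
      have := sort_getD_injOn C (i := i - k) (j := j - k) (by omega) (by omega) hij
      omega
  have habs : ∀ i : Fin n, |wN i.val| = wN i.val := fun i =>
    abs_of_pos (by have := hbound i.val i.isLt; omega)
  refine ⟨fun i => wN i.val, ⟨?_, ?_⟩, ?_, ?_⟩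
  · intro i
    have hb := hbound i.val i.isLt
    rw [habs i]
    exact hb
  · intro i j hij
    simp only [habs] at hij
    exact Fin.ext (hinj i.val i.isLt j.val j.isLt hij)
  · intro i
    show (0:ℤ) < wN i.val
    have hb := hbound i.val i.isLt
    omega
  · ext x
    simp only [PinSet, Set.mem_setOf_eq, Finset.mem_coe]
    constructor
    · rintro ⟨i, h0, h2, heq, hl, hr⟩
      by_cases hi1 : i < 2*k
      · by_cases hi2 : i % 2 = 1
        · rw [hwS i hi1 hi2] at heq
          exact heq ▸ sort_getD_mem S (by omega)
        · exfalso
          rw [hwS (i-1) (by omega) (by omega), hwE i hi1 (by omega)] at hl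
          have := hA ((i-1)/2) (by omega) (i/2) (by omega)
          omega
      · exfalso
        rw [hwT i hi1, hwT (i+1) (by omega)] at hr
        have := sort_getD_lt C (show i - k < i + 1 - k by omega) (by omega)
        omega
    · intro hx
      obtain ⟨j, hjlen, hjeq⟩ := mem_eq_getD S hx
      have hjk : j < k := by omega
      have h2k : 2 * k < n := hkn (by omega)
      refine ⟨2*j+1, by omega, by omega, ?_, ?_, ?_⟩
      · show wN (2*j+1) = x
        rw [hwS (2*j+1) (by omega) (by omega)]
        have e : (2*j+1)/2 = j := by omega
        rw [e, hjeq]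
      · show wN (2*j+1-1) < wN (2*j+1)
        have e0 : 2*j+1-1 = 2*j := by omega
        rw [e0, hwE (2*j) (by omega) (by omega), hwS (2*j+1) (by omega) (by omega)]
        have e1 : (2*j)/2 = j := by omega
        have e2 : (2*j+1)/2 = j := by omega
        rw [e1, e2]
        exact hA j hjk j (by omega)
      · show wN (2*j+1+1) < wN (2*j+1)
        rw [hwS (2*j+1) (by omega) (by omega)]
        have e2 : (2*j+1)/2 = j := by omega
        rw [e2]
        by_cases hc : 2*j+2 < 2*k
        · rw [show 2*j+1+1 = 2*j+2 by omega, hwE (2*j+2) hc (by omega)]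
          have e3 : (2*j+2)/2 = j+1 := by omega
          rw [e3]
          exact hA j hjk (j+1) (le_refl _)
        · rw [show 2*j+1+1 = 2*j+2 by omega, hwT (2*j+2) hc]
          have e3 : 2*j+2-k = j+1 := by omega
          rw [e3]
          exact hA j hjk (j+1) (le_refl _)

lemma adm_subset {n : ℕ} {S : Finset ℤ} (h : Adm n S) : S ⊆ Finset.Icc 1 (n:ℤ) := by
  intro x hx
  obtain ⟨h1, h2⟩ := h x hx
  have hxf : x ∈ S.filter (· ≤ x) := Finset.mem_filter.2 ⟨hx, le_refl x⟩
  have hcp : 1 ≤ (S.filter (· ≤ x)).card := Finset.card_pos.2 ⟨x, hxf⟩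
  rw [Finset.mem_Icc]
  refine ⟨?_, h1⟩
  have : (1:ℤ) ≤ ((S.filter (· ≤ x)).card : ℤ) := by exact_mod_cast hcp
  omega

lemma adm_card {n : ℕ} {S : Finset ℤ} (h : Adm n S) : S.card ≤ (n-1)/2 := by
  rcases S.eq_empty_or_nonempty with rfl | hne
  · simp
  · set x := S.max' hne with hx
    have hxS : x ∈ S := S.max'_mem hne
    have hfe : S.filter (· ≤ x) = S := by
      apply Finset.filter_true_of_mem
      intro y hy
      exact S.le_max' y hy
    obtain ⟨h1, h2⟩ := h x hxS
    rw [hfe] at h2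
    have : 2 * (S.card : ℤ) < (n : ℤ) := lt_of_lt_of_le h2 h1
    omega

open scoped Classical in
noncomputable def AdmF (n d : ℕ) : Finset (Finset ℤ) :=
  ((Finset.Icc (1:ℤ) n).powerset).filter (fun S => Adm n S ∧ S.card ≤ d)

lemma mem_AdmF {n d : ℕ} {S : Finset ℤ} : S ∈ AdmF n d ↔ Adm n S ∧ S.card ≤ d := by
  classical
  rw [AdmF]
  simp only [Finset.mem_filter, Finset.mem_powerset]
  constructor
  · tauto
  · intro hS
    exact ⟨adm_subset hS.1, hS⟩

lemma AdmF_zero (n : ℕ) : AdmF n 0 = {∅} := by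
  ext S
  rw [mem_AdmF, Finset.mem_singleton]
  constructor
  · intro hS
    exact Finset.card_eq_zero.1 (Nat.le_zero.1 hS.2)
  · rintro rfl
    exact ⟨fun x hx => absurd hx (Finset.notMem_empty x), by simp⟩

lemma AdmF_trunc {n d : ℕ} (hd : (n-1)/2 ≤ d) : AdmF n d = AdmF n ((n-1)/2) := by
  ext S
  rw [mem_AdmF, mem_AdmF]
  constructor
  · intro hS
    exact ⟨hS.1, adm_card hS.1⟩
  · intro hS
    exact ⟨hS.1, le_trans hS.2 hd⟩

lemma AdmF_succ {n d : ℕ} (hd1 : 1 ≤ d) (hd : d ≤ n / 2) :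
    AdmF (n+1) d = AdmF n d ∪ (AdmF n (d-1)).image (insert ((n:ℤ)+1)) := by
  classical
  have hcast : (((n:ℕ)+1 : ℕ) : ℤ) = (n:ℤ)+1 := by push_cast; ring
  ext S
  simp only [mem_AdmF, Finset.mem_union, Finset.mem_image]
  constructor
  · rintro ⟨hAdm, hcard⟩
    by_cases hN : ((n:ℤ)+1) ∈ S
    · right
      refine ⟨S.erase ((n:ℤ)+1), ?_, Finset.insert_erase hN⟩
      have hsub : ∀ y ∈ S.erase ((n:ℤ)+1), y ≤ (n:ℤ) := by
        intro y hy
        rw [Finset.mem_erase] at hy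
        have := (hAdm y hy.2).1
        rw [hcast] at this
        rcases lt_or_eq_of_le this with hlt | heq
        · omega
        · exact absurd heq hy.1
      constructor
      · intro x hx
        refine ⟨hsub x hx, ?_⟩
        have hfeq : (S.erase ((n:ℤ)+1)).filter (· ≤ x) = S.filter (· ≤ x) := by
          ext y
          simp only [Finset.mem_filter, Finset.mem_erase]
          constructor
          · tauto
          · rintro ⟨hyS, hyx⟩
            have hxn := hsub x hx
            exact ⟨⟨by omega, hyS⟩, hyx⟩
        rw [hfeq]
        exact ((hAdm x (Finset.mem_erase.1 hx).2).2)
      · have := Finset.card_erase_of_mem hN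
        omega
    · left
      refine ⟨?_, hcard⟩
      intro x hx
      have h1 := (hAdm x hx).1
      rw [hcast] at h1
      refine ⟨?_, (hAdm x hx).2⟩
      rcases lt_or_eq_of_le h1 with hlt | heq
      · omega
      · exact absurd (heq ▸ hx) hN
  · rintro (hS | ⟨S', hS', rfl⟩)
    · refine ⟨?_, hS.2⟩
      intro x hx
      obtain ⟨h1, h2⟩ := hS.1 x hx
      exact ⟨by rw [hcast]; omega, h2⟩
    · obtain ⟨hAdm', hcard'⟩ := hS'
      have hnotin : ((n:ℤ)+1) ∉ S' := by
        intro hc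
        have := (hAdm' _ hc).1
        omega
      have hcardins : (insert ((n:ℤ)+1) S').card = S'.card + 1 :=
        Finset.card_insert_of_notMem hnotin
      constructor
      · intro x hx
        rw [Finset.mem_insert] at hx
        rcases hx with rfl | hx
        · refine ⟨by rw [hcast], ?_⟩
          have hfeq : (insert ((n:ℤ)+1) S').filter (· ≤ (n:ℤ)+1) = insert ((n:ℤ)+1) S' := by
            apply Finset.filter_true_of_mem
            intro y hy
            rw [Finset.mem_insert] at hy
            rcases hy with rfl | hy
            · exact le_refl _
            · have := (hAdm' y hy).1; omega
          rw [hfeq, hcardins]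
          have : (S'.card : ℤ) + 1 ≤ d := by exact_mod_cast by omega
          have hdn : 2 * (d:ℤ) ≤ n := by exact_mod_cast by omega
          omega
        · obtain ⟨h1, h2⟩ := hAdm' x hx
          refine ⟨by rw [hcast]; omega, ?_⟩
          have hfeq : (insert ((n:ℤ)+1) S').filter (· ≤ x) = S'.filter (· ≤ x) := by
            ext y
            simp only [Finset.mem_filter, Finset.mem_insert]
            constructor
            · rintro ⟨rfl | hyS, hyx⟩
              · omega
              · exact ⟨hyS, hyx⟩
            · tauto
          rw [hfeq]
          exact h2
      · omega

lemma AdmF_card : ∀ n d : ℕ, d ≤ (n-1)/2 → (AdmF n d).card = (n-1).choose d := by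
  intro n
  induction n with
  | zero =>
    intro d hd
    have hd0 : d = 0 := by omega
    subst hd0
    rw [AdmF_zero]
    simp
  | succ n ih =>
    intro d hd
    rcases Nat.eq_zero_or_pos d with rfl | hd1
    · rw [AdmF_zero]
      simp
    · have hdn : d ≤ n / 2 := by omega
      rw [AdmF_succ hd1 hdn]
      have hdisj : Disjoint (AdmF n d) ((AdmF n (d-1)).image (insert ((n:ℤ)+1))) := by
        rw [Finset.disjoint_right]
        intro S hS hS2
        rw [Finset.mem_image] at hS
        obtain ⟨S', hS', rfl⟩ := hS
        rw [mem_AdmF] at hS2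
        have hsub := adm_subset hS2.1
        have hmem := hsub (Finset.mem_insert_self ((n:ℤ)+1) S')
        rw [Finset.mem_Icc] at hmem
        omega
      rw [Finset.card_union_of_disjoint hdisj]
      have hinj : Set.InjOn (insert ((n:ℤ)+1)) ((AdmF n (d-1) : Finset (Finset ℤ)) : Set (Finset ℤ)) := by
        intro S1 h1 S2 h2 he
        simp only [Finset.mem_coe] at h1 h2
        have hn1 : ((n:ℤ)+1) ∉ S1 := fun hc => by
          have := Finset.mem_Icc.1 (adm_subset (mem_AdmF.1 h1).1 hc); omega
        have hn2 : ((n:ℤ)+1) ∉ S2 := fun hc => by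
          have := Finset.mem_Icc.1 (adm_subset (mem_AdmF.1 h2).1 hc); omega
        rw [← Finset.erase_insert hn1, ← Finset.erase_insert hn2, he]
      rw [Finset.card_image_of_injOn hinj]
      have hn2 : 2 ≤ n := by omega
      have ihd1 : (AdmF n (d-1)).card = (n-1).choose (d-1) := ih (d-1) (by omega)
      by_cases hc : d ≤ (n-1)/2
      · rw [ih d hc, ihd1]
        obtain ⟨e, rfl⟩ : ∃ e, d = e + 1 := ⟨d-1, by omega⟩
        obtain ⟨m, rfl⟩ : ∃ m, n = m + 1 := ⟨n-1, by omega⟩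
        simp only [Nat.add_sub_cancel]
        rw [Nat.choose_succ_succ]
        simp only [Nat.succ_eq_add_one]
        omega
      · have h1 : (n-1)/2 = d - 1 := by omega
        have h2 : n = 2*d := by omega
        rw [AdmF_trunc (show (n-1)/2 ≤ d by omega), h1, ihd1]
        simp only [Nat.add_sub_cancel]
        obtain ⟨e, rfl⟩ : ∃ e, d = e + 1 := ⟨d-1, by omega⟩
        have hsymm : (n-1).choose (e+1) = (n-1).choose e := by
          have hk : e + 1 ≤ n - 1 := by omega
          have := Nat.choose_symm hk
          rw [show n - 1 - (e+1) = e by omega] at this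
          omega
        obtain ⟨m, rfl⟩ : ∃ m, n = m + 1 := ⟨n-1, by omega⟩
        simp only [Nat.add_sub_cancel] at hsymm ⊢
        rw [Nat.choose_succ_succ]
        simp only [Nat.succ_eq_add_one]
        omega

theorem stmt6 (n d : ℕ) (hd : d ≤ (n - 1) / 2) :
    {S : Finset ℤ | APSA n S ∧ S.card ≤ d}.ncard = Nat.choose (n - 1) d := by
  classical
  have hset : {S : Finset ℤ | APSA n S ∧ S.card ≤ d} = ↑(AdmF n d) := by
    ext S
    simp only [Set.mem_setOf_eq, Finset.mem_coe, mem_AdmF]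
    exact ⟨fun ⟨h1,h2⟩ => ⟨apsa_adm h1, h2⟩, fun ⟨h1,h2⟩ => ⟨adm_apsa h1, h2⟩⟩
  rw [hset, Set.ncard_coe_finset]
  exact AdmF_card n d hd
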